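/- For a measurable matrix-valued function f : G → M_s, the essential range ER(f) (the union of the essential ranges of the eigenvalue functions) is contained in the essential numerical range ENR(f). -/

import Mathlib

open MeasureTheory Matrix Filter
open scoped Real Kronecker ComplexOrder

noncomputable section

/-- The cube `(-π,π)^k`. -/
def Ik (k : ℕ) : Set (Fin k → ℝ) := Set.univ.pi fun _ => Set.Ioo (-π) π

/-- Fourier coefficients of a matrix-valued symbol. -/
def fourierCoeffM (k s : ℕ) (f : (Fin k → ℝ) → Matrix (Fin s) (Fin s) ℂ)
    (j : Fin k → ℤ) : Matrix (Fin s) (Fin s) ℂ :=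
  fun a b => (((2 * π : ℝ) ^ k)⁻¹ : ℂ) *
    ∫ x in Ik k, Complex.exp (-Complex.I * ∑ i, (j i : ℂ) * (x i : ℂ)) * f x a b

/-- Multilevel block Toeplitz matrix. -/
def toeplitz (k s : ℕ) (n : Fin k → ℕ) (f : (Fin k → ℝ) → Matrix (Fin s) (Fin s) ℂ) :
    Matrix ((∀ i, Fin (n i)) × Fin s) ((∀ i, Fin (n i)) × Fin s) ℂ :=
  fun p q => fourierCoeffM k s f (fun i => (p.1 i : ℤ) - (q.1 i : ℤ)) p.2 q.2

/-- Singular values of a square complex matrix. -/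
def singularValues {m : Type*} [Fintype m] [DecidableEq m] (A : Matrix m m ℂ) : m → ℝ :=
  fun i => Real.sqrt ((Matrix.posSemidef_conjTranspose_mul_self A).1.eigenvalues i)

/-- Trace norm (Schatten 1-norm). -/
def traceNorm {m : Type*} [Fintype m] [DecidableEq m] (A : Matrix m m ℂ) : ℝ :=
  ∑ i, singularValues A i

/-- Spectral norm (largest singular value). -/
def specNorm {m : Type*} [Fintype m] [DecidableEq m] (A : Matrix m m ℂ) : ℝ :=
  ⨆ i, singularValues A i

/-- Essential numerical range of a matrix-valued function over `G`. -/
def ENR {k s : ℕ} (G : Set (Fin k → ℝ)) (f : (Fin k → ℝ) → Matrix (Fin s) (Fin s) ℂ) :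
    Set ℂ :=
  {r : ℂ | ∀ ε > 0, 0 < volume {t ∈ G | ∃ v : EuclideanSpace ℂ (Fin s),
    ‖v‖ = 1 ∧ dist (star (v : Fin s → ℂ) ⬝ᵥ f t *ᵥ (v : Fin s → ℂ)) r < ε}}

/-- Essential range of a scalar function over `G`. -/
def essRange {k : ℕ} (G : Set (Fin k → ℝ)) (h : (Fin k → ℝ) → ℂ) : Set ℂ :=
  {r : ℂ | ∀ ε > 0, 0 < volume {t ∈ G | dist (h t) r < ε}}

/-- Essential range of a matrix-valued function (union of essential ranges of
eigenvalue functions). -/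
def matER {k s : ℕ} (G : Set (Fin k → ℝ)) (f : (Fin k → ℝ) → Matrix (Fin s) (Fin s) ℂ) :
    Set ℂ :=
  {r : ℂ | ∀ ε > 0, 0 < volume {t ∈ G | ∃ w : ℂ, (f t).charpoly.IsRoot w ∧ dist w r < ε}}

/-- `f` is weakly sectorial. -/
def WeaklySectorial {k s : ℕ} (f : (Fin k → ℝ) → Matrix (Fin s) (Fin s) ℂ) : Prop :=
  ∃ (a : ℂ) (c : ℝ), ‖a‖ = 1 ∧ 0 ≤ c ∧ ∀ w ∈ ENR (Ik k) f, c ≤ ((starRingEnd ℂ) a * w).re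

/-- Rayleigh-quotient minimal eigenvalue. -/
def minEig {s : ℕ} (M : Matrix (Fin s) (Fin s) ℂ) : ℝ :=
  ⨅ v : {v : EuclideanSpace ℂ (Fin s) // ‖v‖ = 1},
    (star ((v : EuclideanSpace ℂ (Fin s)) : Fin s → ℂ) ⬝ᵥ
      M *ᵥ ((v : EuclideanSpace ℂ (Fin s)) : Fin s → ℂ)).re

/-- `f` is sectorial. -/
def Sectorial {k s : ℕ} (f : (Fin k → ℝ) → Matrix (Fin s) (Fin s) ℂ) : Prop :=
  ∃ (a : ℂ) (c : ℝ), ‖a‖ = 1 ∧ 0 ≤ c ∧ (∀ w ∈ ENR (Ik k) f, c ≤ ((starRingEnd ℂ) a * w).re) ∧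
    ¬ (∀ᵐ x ∂(volume.restrict (Ik k)),
        minEig ((starRingEnd ℂ a) • f x + a • (f x)ᴴ) = c)


lemma exists_unit_rayleigh {s : ℕ} (M : Matrix (Fin s) (Fin s) ℂ) (w : ℂ)
    (h : M.charpoly.IsRoot w) :
    ∃ v : EuclideanSpace ℂ (Fin s), ‖v‖ = 1 ∧
      star (v : Fin s → ℂ) ⬝ᵥ M *ᵥ (v : Fin s → ℂ) = w := by
  have hdet : (Matrix.scalar (Fin s) w - M).det = 0 := by
    have h := h
    rw [Polynomial.IsRoot.def, Matrix.charpoly, eval_det, matPolyEquiv_charmatrix,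
      Polynomial.eval_sub, Polynomial.eval_X, Polynomial.eval_C] at h
    exact h
  obtain ⟨v, hv0, hv⟩ := (Matrix.exists_mulVec_eq_zero_iff).2 hdet
  have hEig : M *ᵥ v = w • v := by
    rw [Matrix.sub_mulVec] at hv
    have h1 : Matrix.scalar (Fin s) w *ᵥ v = w • v := by
      ext i; simp [Matrix.scalar_apply, Matrix.mulVec_diagonal]
    rw [h1, sub_eq_zero] at hv
    exact hv.symm
  set V : EuclideanSpace ℂ (Fin s) := WithLp.toLp 2 v with hV
  have hVne : V ≠ 0 := by simpa [hV] using hv0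
  have hnorm : ‖V‖ ≠ 0 := norm_ne_zero_iff.2 hVne
  refine ⟨((‖V‖ : ℂ))⁻¹ • V, ?_, ?_⟩
  · rw [norm_smul]
    simp [hnorm]
  · have hcoe : ((((‖V‖ : ℂ))⁻¹ • V : EuclideanSpace ℂ (Fin s)) : Fin s → ℂ) = ((‖V‖ : ℂ))⁻¹ • v := rfl
    rw [hcoe]
    have hvv : star v ⬝ᵥ v = ((‖V‖ : ℂ)) ^ 2 := by
      have h2 : ‖V‖ ^ 2 = ∑ i, ‖v i‖ ^ 2 := by
        rw [EuclideanSpace.norm_eq, Real.sq_sqrt (by positivity)]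
      rw [show ((‖V‖:ℂ))^2 = ((‖V‖^2 : ℝ) : ℂ) by push_cast; ring, h2]
      push_cast
      simp only [dotProduct, Pi.star_apply]
      congr 1
      ext i
      exact RCLike.conj_mul (v i)
    rw [Matrix.mulVec_smul, hEig, star_smul, smul_dotProduct, dotProduct_smul,
      dotProduct_smul, hvv]
    simp only [smul_eq_mul, star_inv₀, Complex.star_def, Complex.conj_ofReal]
    have hne : ((‖V‖:ℂ)) ≠ 0 := by simpa using hnorm
    field_simp

/-- The essential range of a matrix-valued function (union of the essential ranges
of its eigenvalue functions) is contained in its essential numerical range. -/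
theorem stmt2 {k s : ℕ} (G : Set (Fin k → ℝ)) (hG : MeasurableSet G)
    (f : (Fin k → ℝ) → Matrix (Fin s) (Fin s) ℂ) (hf : ∀ i j, Measurable fun t => f t i j)
    (ev : Fin s → (Fin k → ℝ) → ℂ) (hev_meas : ∀ j, Measurable (ev j))
    (hev : ∀ t ∈ G, (f t).charpoly.roots = Multiset.map (fun j => ev j t) Finset.univ.val) :
    (⋃ j, essRange G (ev j)) ⊆ ENR G f := by
  intro r hr
  rw [Set.mem_iUnion] at hr
  obtain ⟨j, hj⟩ := hr
  intro ε hε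
  refine lt_of_lt_of_le (hj ε hε) (measure_mono ?_)
  rintro t ⟨htG, hd⟩
  refine ⟨htG, ?_⟩
  have hroot : (f t).charpoly.IsRoot (ev j t) := by
    have hmem : ev j t ∈ (f t).charpoly.roots := by
      rw [hev t htG]
      exact Multiset.mem_map.2 ⟨j, Finset.mem_univ_val j, rfl⟩
    exact Polynomial.isRoot_of_mem_roots hmem
  obtain ⟨v, hv1, hv2⟩ := exists_unit_rayleigh (f t) (ev j t) hroot
  exact ⟨v, hv1, by rw [hv2]; exact hd⟩

end
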